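/- For the two-armed σ-over-penalized Narendra–Shapiro algorithm, for every n ≥ 0 the conditional expectation of Xₙ₊₁ given Fₙ equals Xₙ + γₙ₊₁·Xₙ(1−Xₙ)(p₁−p₂) + γₙ₊₁ρₙ₊₁·[(1−Xₙ)²(1−σp₂) − Xₙ²(1−σp₁)]. -/

import Mathlib

open MeasureTheory ProbabilityTheory Real Filter

noncomputable section

/-- Step sequence `γₙ = γ₁ / √n` (also used for `ρₙ = ρ₁ / √n`). -/
def NSstep (c : ℝ) (n : ℕ) : ℝ := c / Real.sqrt n

/-- Real value (`0` or `1`) attached to a Boolean Bernoulli outcome. -/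
def bval (b : Bool) : ℝ := if b then 1 else 0

/-- Probability that a Bernoulli random variable of parameter `p` takes the value `b`. -/
def bern (p : ℝ) (b : Bool) : ℝ := if b then p else 1 - p

/-- The two-armed `σ`-over-penalized Narendra–Shapiro algorithm with steps
`γₙ = γ₁/√n` and `ρₙ = ρ₁/√n`.  Arm `0` (reward probability `p₁`) is the best arm,
arm `1` has reward probability `p₂`.  `Xₙ` is the probability of drawing arm `0` at
time `n`, `Iₙ₊₁` is the arm selected at step `n+1`, `Aₙʲ` the reward of arm `j` at
time `n` and `Bₙ` the extra Bernoulli(σ) variables used for the over-penalization. -/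
structure NS2 (Ω : Type) [mΩ : MeasurableSpace Ω] where
  μ : Measure Ω
  prob : IsProbabilityMeasure μ
  p₁ : ℝ
  p₂ : ℝ
  σ : ℝ
  γ₁ : ℝ
  ρ₁ : ℝ
  hp₂ : 0 ≤ p₂
  hp : p₂ < p₁
  hp₁ : p₁ ≤ 1
  hσ : σ ∈ Set.Icc (0:ℝ) 1
  hγ₁ : γ₁ ∈ Set.Ioo (0:ℝ) 1
  hρ₁ : ρ₁ ∈ Set.Ioo (0:ℝ) 1
  A : ℕ → Fin 2 → Ω → ℝ
  B : ℕ → Ω → ℝ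
  I : ℕ → Ω → Fin 2
  X : ℕ → Ω → ℝ
  F : Filtration ℕ mΩ
  hAmeas : ∀ n j, Measurable (A n j)
  hBmeas : ∀ n, Measurable (B n)
  hAval : ∀ n j ω, A n j ω = 0 ∨ A n j ω = 1
  hBval : ∀ n ω, B n ω = 0 ∨ B n ω = 1
  hAlaw : ∀ n (j : Fin 2), μ {ω | A n j ω = 1} = ENNReal.ofReal (if j = 0 then p₁ else p₂)
  hBlaw : ∀ n, μ {ω | B n ω = 1} = ENNReal.ofReal σ
  /-- the reward sequences and the penalization sequence are (mutually) independent -/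
  hIndep : iIndepFun
      (fun (k : ℕ × Fin 3) ω => if k.2 = 0 then A k.1 0 ω else if k.2 = 1 then A k.1 1 ω else B k.1 ω) μ
  hX0 : ∀ ω, X 0 ω ∈ Set.Icc (0:ℝ) 1
  hXmeas : ∀ n, Measurable[F n] (X n)
  hImeas : ∀ n, Measurable[F (n+1)] (I (n+1))
  hObs : ∀ n, Measurable[F (n+1)] (fun ω => A (n+1) (I (n+1) ω) ω)
  /-- conditionally on the past, the arm `Iₙ₊₁` is drawn with distribution `(Xₙ, 1-Xₙ)`,
  independently of the (Bernoulli) rewards and of `Bₙ₊₁`. -/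
  condLaw : ∀ n (j : Fin 2) (a b : Bool),
    (μ[Set.indicator {ω | I (n+1) ω = j ∧ A (n+1) j ω = bval a ∧ B (n+1) ω = bval b}
        (fun _ => (1:ℝ)) | F n])
      =ᵐ[μ] fun ω => (if j = 0 then X n ω else 1 - X n ω) * bern (if j = 0 then p₁ else p₂) a
          * bern σ b
  /-- the recursive update of the algorithm -/
  hrec : ∀ n ω, X (n+1) ω = X n ω
      + NSstep γ₁ (n+1) * ((if I (n+1) ω = 0 then 1 else 0) - X n ω) * A (n+1) (I (n+1) ω) ω
      - NSstep γ₁ (n+1) * NSstep ρ₁ (n+1) *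
        (X n ω * (if I (n+1) ω = 0 then 1 else 0)
          - (1 - X n ω) * (if I (n+1) ω = 1 then 1 else 0)) *
        (1 - A (n+1) (I (n+1) ω) ω * B (n+1) ω)

lemma NSstep_pos {c : ℝ} (hc : 0 < c) (n : ℕ) : 0 < NSstep c (n+1) := by
  have h : (0:ℝ) < Real.sqrt (n+1) := Real.sqrt_pos.mpr (by positivity)
  unfold NSstep
  push_cast
  positivity

lemma NSstep_le {c : ℝ} (hc : 0 ≤ c) (n : ℕ) : NSstep c (n+1) ≤ c := by
  have h1 : (1:ℝ) ≤ Real.sqrt ((n:ℝ)+1) :=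
    Real.one_le_sqrt.mpr (by have := Nat.cast_nonneg (α := ℝ) n; linarith)
  unfold NSstep
  push_cast
  exact div_le_self hc h1

set_option maxHeartbeats 1600000 in
lemma NS2.X_mem {Ω : Type} [MeasurableSpace Ω] (S : NS2 Ω) :
    ∀ n ω, S.X n ω ∈ Set.Icc (0:ℝ) 1 := by
  intro n
  induction n with
  | zero => exact S.hX0
  | succ n ih =>
    intro ω
    obtain ⟨hx0, hx1⟩ := ih ω
    have hγ0 : 0 < NSstep S.γ₁ (n+1) := NSstep_pos S.hγ₁.1 n
    have hγ1 : NSstep S.γ₁ (n+1) < 1 := lt_of_le_of_lt (NSstep_le S.hγ₁.1.le n) S.hγ₁.2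
    have hρ0 : 0 < NSstep S.ρ₁ (n+1) := NSstep_pos S.hρ₁.1 n
    have hρ1 : NSstep S.ρ₁ (n+1) < 1 := lt_of_le_of_lt (NSstep_le S.hρ₁.1.le n) S.hρ₁.2
    set γ := NSstep S.γ₁ (n+1) with hγdef
    set ρ := NSstep S.ρ₁ (n+1) with hρdef
    have hγρ0 : 0 < γ * ρ := mul_pos hγ0 hρ0
    have hγρ1 : γ * ρ < 1 := by nlinarith
    have h2 : ∀ i : Fin 2, i = 0 ∨ i = 1 := by decide
    have hA := S.hAval (n+1) (S.I (n+1) ω) ω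
    have hB := S.hBval (n+1) ω
    rw [Set.mem_Icc, S.hrec, ← hγdef, ← hρdef]
    rcases h2 (S.I (n+1) ω) with hI | hI <;> rw [hI] at hA <;>
      rcases hA with hA | hA <;> rcases hB with hB | hB <;>
      simp only [hI, hA, hB, mul_one, mul_zero, sub_zero, zero_mul, one_mul,
        Fin.isValue, reduceIte, show ((0:Fin 2) ≠ 1) by decide,
        show ((1:Fin 2) ≠ 0) by decide] <;>
      constructor <;>
      nlinarith [mul_nonneg hγρ0.le hx0, mul_nonneg hγρ0.le (sub_nonneg.mpr hx1),
        mul_nonneg hγ0.le hx0, mul_nonneg hγ0.le (sub_nonneg.mpr hx1),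
        mul_nonneg (sub_nonneg.mpr hγρ1.le) hx0,
        mul_nonneg (sub_nonneg.mpr hγρ1.le) (sub_nonneg.mpr hx1),
        mul_nonneg (sub_nonneg.mpr hγ1.le) hx0,
        mul_nonneg (sub_nonneg.mpr hγ1.le) (sub_nonneg.mpr hx1)]

def NSg (γ ρ : ℝ) (j : Fin 2) (a b : Bool) (x : ℝ) : ℝ :=
  x + γ * ((if j = 0 then 1 else 0) - x) * bval a
    - γ * ρ * (x * (if j = 0 then 1 else 0) - (1 - x) * (if j = 1 then 1 else 0))
      * (1 - bval a * bval b)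

lemma NS2.decomp {Ω : Type} [MeasurableSpace Ω] (S : NS2 Ω) (n : ℕ) (ω : Ω) :
    S.X (n+1) ω = ∑ k : Fin 2 × Bool × Bool,
      NSg (NSstep S.γ₁ (n+1)) (NSstep S.ρ₁ (n+1)) k.1 k.2.1 k.2.2 (S.X n ω) *
        Set.indicator {ω' | S.I (n+1) ω' = k.1 ∧ S.A (n+1) k.1 ω' = bval k.2.1
          ∧ S.B (n+1) ω' = bval k.2.2} (fun _ => (1:ℝ)) ω := by
  have h2 : ∀ i : Fin 2, i = 0 ∨ i = 1 := by decide
  have hA := S.hAval (n+1) (S.I (n+1) ω) ω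
  have hB := S.hBval (n+1) ω
  rw [S.hrec]
  rcases h2 (S.I (n+1) ω) with hI | hI <;> rw [hI] at hA <;>
    rcases hA with hA | hA <;> rcases hB with hB | hB <;>
    · simp [Fintype.sum_prod_type, Fintype.sum_bool, Fin.sum_univ_two, NSg,
        Set.indicator_apply, Set.mem_setOf_eq, hI, hA, hB, bval,
        show (0:Fin 2) ≠ 1 from by decide, show (1:Fin 2) ≠ 0 from by decide]
      try ring

/-- Pseudo-regret after `n` plays: `R̄ₙ = (p₁-p₂) E[∑_{k=1}^n (1-X_k)]`. -/
def NS2.pseudoRegret {Ω : Type} [MeasurableSpace Ω] (S : NS2 Ω) (n : ℕ) : ℝ :=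
  (S.p₁ - S.p₂) * ∫ ω, (∑ k ∈ Finset.Icc 1 n, (1 - S.X k ω)) ∂S.μ

/-- One step drift of the two-armed `σ`-over-penalized Narendra–Shapiro algorithm:
`E[Xₙ₊₁ | Fₙ] = Xₙ + γₙ₊₁ Xₙ(1-Xₙ)(p₁-p₂) + γₙ₊₁ρₙ₊₁ [(1-Xₙ)²(1-σp₂) - Xₙ²(1-σp₁)]`. -/
theorem condExp_step_NS2 (Ω : Type) [MeasurableSpace Ω] (S : NS2 Ω) (n : ℕ) :
    (S.μ[S.X (n+1) | S.F n]) =ᵐ[S.μ] fun ω =>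
      S.X n ω + NSstep S.γ₁ (n+1) * (S.X n ω * (1 - S.X n ω) * (S.p₁ - S.p₂))
        + NSstep S.γ₁ (n+1) * NSstep S.ρ₁ (n+1) *
          ((1 - S.X n ω)^2 * (1 - S.σ * S.p₂) - (S.X n ω)^2 * (1 - S.σ * S.p₁)) := by
  haveI := S.prob
  have hm : S.F n ≤ _ := S.F.le n
  have hXm : Measurable (S.X n) := (S.hXmeas n).mono hm le_rfl
  set γ := NSstep S.γ₁ (n+1) with hγdef
  set ρ := NSstep S.ρ₁ (n+1) with hρdef
  have hγ0 : 0 < γ := NSstep_pos S.hγ₁.1 n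
  have hγ1 : γ < 1 := lt_of_le_of_lt (NSstep_le S.hγ₁.1.le n) S.hγ₁.2
  have hρ0 : 0 < ρ := NSstep_pos S.hρ₁.1 n
  have hρ1 : ρ < 1 := lt_of_le_of_lt (NSstep_le S.hρ₁.1.le n) S.hρ₁.2
  set E : Fin 2 × Bool × Bool → Set Ω := fun k =>
    {ω' | S.I (n+1) ω' = k.1 ∧ S.A (n+1) k.1 ω' = bval k.2.1
      ∧ S.B (n+1) ω' = bval k.2.2} with hEdef
  set g : Fin 2 × Bool × Bool → Ω → ℝ := fun k ω =>
    NSg γ ρ k.1 k.2.1 k.2.2 (S.X n ω) with hgdef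
  set f : Fin 2 × Bool × Bool → Ω → ℝ := fun k =>
    g k * Set.indicator (E k) (fun _ => (1:ℝ)) with hfdef
  have hNScont : ∀ (j : Fin 2) (a b : Bool), Continuous (NSg γ ρ j a b) := by
    intro j a b; unfold NSg; fun_prop
  have hgSM : ∀ k, StronglyMeasurable[S.F n] (g k) := fun k =>
    ((hNScont k.1 k.2.1 k.2.2).measurable.comp (S.hXmeas n)).stronglyMeasurable
  have hgbd : ∀ k ω, |g k ω| ≤ 7 := by
    intro k ω
    obtain ⟨hx0, hx1⟩ := S.X_mem n ω
    obtain ⟨j, a, b⟩ := k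
    have h2 : ∀ i : Fin 2, i = 0 ∨ i = 1 := by decide
    rw [abs_le]
    rcases h2 j with hj | hj <;> subst hj <;> cases a <;> cases b <;>
      simp [hgdef, NSg, bval, show (0:Fin 2) ≠ 1 from by decide, show (1:Fin 2) ≠ 0 from by decide] <;>
      constructor <;>
      nlinarith [mul_nonneg hγ0.le hρ0.le, mul_nonneg (mul_nonneg hγ0.le hρ0.le) hx0,
        mul_nonneg (mul_nonneg hγ0.le hρ0.le) (sub_nonneg.mpr hx1),
        mul_nonneg hγ0.le hx0, mul_nonneg hγ0.le (sub_nonneg.mpr hx1)]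
  have hEmeas : ∀ k, MeasurableSet (E k) := by
    intro k
    have h1 : MeasurableSet {ω' | S.I (n+1) ω' = k.1} :=
      ((S.hImeas n).mono (S.F.le (n+1)) le_rfl) (measurableSet_singleton k.1)
    have h2 : MeasurableSet {ω' | S.A (n+1) k.1 ω' = bval k.2.1} :=
      (S.hAmeas (n+1) k.1) (measurableSet_singleton (bval k.2.1))
    have h3 : MeasurableSet {ω' | S.B (n+1) ω' = bval k.2.2} :=
      (S.hBmeas (n+1)) (measurableSet_singleton (bval k.2.2))
    rw [hEdef]
    simp only [Set.setOf_and]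
    exact h1.inter (h2.inter h3)
  have hindmeas : ∀ k, Measurable (Set.indicator (E k) (fun _ => (1:ℝ))) := fun k =>
    measurable_const.indicator (hEmeas k)
  have hindint : ∀ k, Integrable (Set.indicator (E k) (fun _ => (1:ℝ))) S.μ := by
    intro k
    refine (integrable_const (1:ℝ)).mono' (hindmeas k).aestronglyMeasurable (ae_of_all _ ?_)
    intro ω
    rw [Set.indicator_apply]
    split <;> simp
  have hfint : ∀ k, Integrable (f k) S.μ := by
    intro k
    have hmeas : Measurable (f k) :=
      ((hNScont k.1 k.2.1 k.2.2).measurable.comp hXm).mul (hindmeas k)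
    refine (integrable_const (7:ℝ)).mono' hmeas.aestronglyMeasurable (ae_of_all _ ?_)
    intro ω
    have h1 : |Set.indicator (E k) (fun _ => (1:ℝ)) ω| ≤ 1 := by
      rw [Set.indicator_apply]; split <;> simp
    calc ‖f k ω‖ = |g k ω| * |Set.indicator (E k) (fun _ => (1:ℝ)) ω| := by
          simp [hfdef, abs_mul]
      _ ≤ 7 * 1 := mul_le_mul (hgbd k ω) h1 (abs_nonneg _) (by norm_num)
      _ = 7 := by norm_num
  have hXeq : S.X (n+1) = ∑ k : Fin 2 × Bool × Bool, f k := by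
    funext ω
    rw [S.decomp n ω, Finset.sum_apply]
    rfl
  have h1 : S.μ[S.X (n+1)|S.F n] =ᵐ[S.μ] ∑ k : Fin 2 × Bool × Bool, S.μ[f k|S.F n] := by
    rw [hXeq]
    exact condExp_finset_sum (fun k _ => hfint k) _
  have h2 : ∀ k : Fin 2 × Bool × Bool, S.μ[f k|S.F n] =ᵐ[S.μ] fun ω =>
      g k ω * ((if k.1 = 0 then S.X n ω else 1 - S.X n ω)
        * bern (if k.1 = 0 then S.p₁ else S.p₂) k.2.1 * bern S.σ k.2.2) := by
    intro k
    have hmul := condExp_mul_of_stronglyMeasurable_left (μ := S.μ) (hgSM k) (hfint k) (hindint k)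
    refine hmul.trans ?_
    filter_upwards [S.condLaw n k.1 k.2.1 k.2.2] with ω hω
    simp only [Pi.mul_apply]
    rw [hω]
  refine h1.trans ?_
  have h3 := MeasureTheory.ae_all_iff.mpr h2
  filter_upwards [h3] with ω hω
  rw [Finset.sum_apply, Finset.sum_congr rfl (fun k _ => hω k)]
  obtain ⟨hx0, hx1⟩ := S.X_mem n ω
  simp only [hgdef]
  simp [Fintype.sum_prod_type, Fintype.sum_bool, Fin.sum_univ_two, NSg, bern, bval,
    show (0:Fin 2) ≠ 1 from by decide, show (1:Fin 2) ≠ 0 from by decide]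
  ring


end
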